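/- For fixed β ∈ [0,1/2], the function g₂(δ) = h(β*δ) - h(δ) is monotonically non-increasing in δ on [0,1/2], where h is the binary entropy function and * denotes binary convolution a*b = a(1-b)+(1-a)b. -/
import Mathlib

open Real

lemma binEnt_eq (x : ℝ) :
    -x * Real.logb 2 x - (1 - x) * Real.logb 2 (1 - x) = Real.binEntropy x / Real.log 2 := by
  rw [Real.binEntropy, Real.logb, Real.logb, Real.log_inv, Real.log_inv]
  ring

lemma aux_antitone (β : ℝ) (hβ : β ∈ Set.Icc (0 : ℝ) (1 / 2)) :
    AntitoneOn (fun δ : ℝ => Real.binEntropy (β + (1 - 2 * β) * δ) - Real.binEntropy δ)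
      (Set.Icc (0 : ℝ) (1 / 2)) := by
  obtain ⟨hβ0, hβ2⟩ := hβ
  have key : ∀ x ∈ Set.Ioo (0 : ℝ) (1 / 2),
      HasDerivAt (fun δ : ℝ => Real.binEntropy (β + (1 - 2 * β) * δ) - Real.binEntropy δ)
        ((Real.log (1 - (β + (1 - 2 * β) * x)) - Real.log (β + (1 - 2 * β) * x)) * (1 - 2 * β)
          - (Real.log (1 - x) - Real.log x)) x := by
    intro x ⟨hx0, hx2⟩
    set c := β + (1 - 2 * β) * x with hc
    have hc0 : 0 < c := by nlinarith
    have hc2 : c ≤ 1 / 2 := by nlinarith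
    have h1 : HasDerivAt (fun δ : ℝ => β + (1 - 2 * β) * δ) (1 - 2 * β) x := by
      simpa using ((hasDerivAt_id x).const_mul (1 - 2 * β)).const_add β
    have h2 := (Real.hasDerivAt_binEntropy (p := c) hc0.ne' (by linarith)).comp x h1
    exact h2.sub (Real.hasDerivAt_binEntropy hx0.ne' (by linarith))
  apply antitoneOn_of_deriv_nonpos (convex_Icc 0 (1/2))
  · fun_prop
  · intro x hx
    rw [interior_Icc] at hx
    exact (key x hx).differentiableAt.differentiableWithinAt
  · intro x hx
    rw [interior_Icc] at hx
    rw [(key x hx).deriv]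
    obtain ⟨hx0, hx2⟩ := hx
    set c := β + (1 - 2 * β) * x with hc
    have hc0 : 0 < c := by nlinarith
    have hc2 : c ≤ 1 / 2 := by nlinarith
    have hxc : x ≤ c := by nlinarith
    have hA : 0 ≤ Real.log (1 - c) - Real.log c :=
      sub_nonneg.2 (Real.log_le_log hc0 (by linarith))
    have hB : Real.log (1 - c) - Real.log c ≤ Real.log (1 - x) - Real.log x := by
      have := Real.log_le_log (by linarith : (0:ℝ) < 1 - c) (by linarith : 1 - c ≤ 1 - x)
      have := Real.log_le_log hx0 hxc
      linarith
    nlinarith [mul_le_mul_of_nonneg_right hA (by linarith : (0:ℝ) ≤ 2 * β)]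

/-- For fixed `β ∈ [0,1/2]`, the function `δ ↦ h(β*δ) - h(δ)` is non-increasing on `[0,1/2]`. -/
theorem binEntropy_conv_sub_antitone (β : ℝ) (hβ : β ∈ Set.Icc (0 : ℝ) (1 / 2))
    (h : ℝ → ℝ) (hdef : ∀ x, h x = -x * Real.logb 2 x - (1 - x) * Real.logb 2 (1 - x))
    (conv : ℝ → ℝ → ℝ) (hconv : ∀ a b, conv a b = a * (1 - b) + (1 - a) * b) :
    ∀ δ δ' : ℝ, δ ∈ Set.Icc (0 : ℝ) (1 / 2) → δ' ∈ Set.Icc (0 : ℝ) (1 / 2) → δ ≤ δ' →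
      h (conv β δ') - h δ' ≤ h (conv β δ) - h δ := by
  intro δ δ' hδ hδ' hle
  have hmain := aux_antitone β hβ hδ hδ' hle
  simp only at hmain
  have hlog2 : (0:ℝ) < Real.log 2 := Real.log_pos (by norm_num)
  have e : ∀ x, h x = Real.binEntropy x / Real.log 2 := fun x => (hdef x).trans (binEnt_eq x)
  have hc : ∀ b, conv β b = β + (1 - 2 * β) * b := fun b => by rw [hconv]; ring
  rw [e, e, e, e, hc, hc]
  rw [div_sub_div_same, div_sub_div_same]
  exact (div_le_div_iff_of_pos_right hlog2).2 hmain
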